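/- arXiv:2603.08325 — 6 statements merged into one kernel-verified Lean document; each statement's English description precedes it below -/
import Mathlib

section
/- Let Λ(x,y) = Σ_{i=1}^N ln P(y_i | x_{i-1}, x_i) be the weight function for a first-order channel, x* a fixed binary sequence of length N, and Rel(S) = Λ(x*,y) − Λ(f_S(x*),y) where f_S flips the bits of x* at positions in S. If W = W₁ ∪ W₂ with W₁, W₂ disjoint nonempty subsets of {1,...,N} and min(W₂) − max(W₁) > 1, then Rel(W) = Rel(W₁) + Rel(W₂). -/
/-- Flip the bits of `x` at the positions in `S`. -/
def flipSeq (S : Finset ℕ) (x : ℕ → Bool) : ℕ → Bool :=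
  fun i => if i ∈ S then !(x i) else x i

/-- First-order weight function: `Λ(x,y) = Σ_{i=1}^N ln P(y_i | x_{i-1}, x_i)`,
where `ℓ i b' b` stands for `ln P(y_i | x_{i-1} = b', x_i = b)` (the received
values `y` are absorbed into `ℓ`). -/
noncomputable def Lam1 (N : ℕ) (ℓ : ℕ → Bool → Bool → ℝ) (x : ℕ → Bool) : ℝ :=
  ∑ i ∈ Finset.Icc 1 N, ℓ i (x (i - 1)) (x i)

/-- Sequence reliability of a set `S`, relative to the hard detection sequence `xs`. -/
noncomputable def Rel1 (N : ℕ) (ℓ : ℕ → Bool → Bool → ℝ) (xs : ℕ → Bool)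
    (S : Finset ℕ) : ℝ :=
  Lam1 N ℓ xs - Lam1 N ℓ (flipSeq S xs)

lemma flipSeq_not_mem (S : Finset ℕ) (x : ℕ → Bool) {i : ℕ} (h : i ∉ S) :
    flipSeq S x i = x i := by simp [flipSeq, h]

/-- Lemma 1: additivity of sequence reliability over sets separated by more
than one index (first-order channel). -/
theorem rel_decomposable (N : ℕ) (ℓ : ℕ → Bool → Bool → ℝ) (xs : ℕ → Bool)
    (W₁ W₂ : Finset ℕ) (h₁ : W₁.Nonempty) (h₂ : W₂.Nonempty)
    (hs₁ : W₁ ⊆ Finset.Icc 1 N) (hs₂ : W₂ ⊆ Finset.Icc 1 N)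
    (hdisj : Disjoint W₁ W₂)
    (hgap : W₁.max' h₁ + 1 < W₂.min' h₂) :
    Rel1 N ℓ xs (W₁ ∪ W₂) = Rel1 N ℓ xs W₁ + Rel1 N ℓ xs W₂ := by
  classical
  unfold Rel1 Lam1
  rw [← Finset.sum_sub_distrib, ← Finset.sum_sub_distrib, ← Finset.sum_sub_distrib,
    ← Finset.sum_add_distrib]
  refine Finset.sum_congr rfl fun i _ => ?_
  by_cases h : i ∈ W₁ ∨ i - 1 ∈ W₁
  · -- then i and i-1 are not in W₂
    have key : ∀ j : ℕ, j ∈ W₁ → ∀ k : ℕ, k ≤ j + 1 → k ∉ W₂ := by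
      intro j hj k hk hkW₂
      have h1 : j ≤ W₁.max' h₁ := Finset.le_max' _ _ hj
      have h2 : W₂.min' h₂ ≤ k := Finset.min'_le _ _ hkW₂
      omega
    have hi2 : i ∉ W₂ := by
      rcases h with h | h
      · exact key i h i (by omega)
      · exact key (i-1) h i (by omega)
    have hi12 : i - 1 ∉ W₂ := by
      rcases h with h | h
      · exact key i h (i-1) (by omega)
      · exact key (i-1) h (i-1) (by omega)
    have e1 : flipSeq (W₁ ∪ W₂) xs i = flipSeq W₁ xs i := by
      simp [flipSeq, Finset.mem_union, hi2]
    have e2 : flipSeq (W₁ ∪ W₂) xs (i-1) = flipSeq W₁ xs (i-1) := by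
      simp [flipSeq, Finset.mem_union, hi12]
    rw [e1, e2, flipSeq_not_mem _ _ hi2, flipSeq_not_mem _ _ hi12]
    ring
  · push_neg at h
    obtain ⟨hi1, hi11⟩ := h
    have e1 : flipSeq (W₁ ∪ W₂) xs i = flipSeq W₂ xs i := by
      simp [flipSeq, Finset.mem_union, hi1]
    have e2 : flipSeq (W₁ ∪ W₂) xs (i-1) = flipSeq W₂ xs (i-1) := by
      simp [flipSeq, Finset.mem_union, hi11]
    rw [e1, e2, flipSeq_not_mem _ _ hi1, flipSeq_not_mem _ _ hi11]
    ring
end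

section
/- For an L-th order channel with weight function Λ(x,y) = Σ_{i=1}^N ln P(y_i | x_{i-L},...,x_i) and Rel(S) = Λ(x*,y) − Λ(f_S(x*),y): if W = W₁ ∪ W₂ with W₁, W₂ disjoint nonempty subsets of {1,...,N} and min(W₂) − max(W₁) > L, then Rel(W) = Rel(W₁) + Rel(W₂). -/
/-- `L`-th order weight function: `Λ(x,y) = Σ_{i=1}^N ln P(y_i | x_{i-L},…,x_i)`,
where `ℓ i x = ln P(y_i | x_{i-L:i})` depends on `x` only through the window
`{i-L, …, i}` (hypothesis `hloc` below). -/
noncomputable def LamL (N : ℕ) (ℓ : ℕ → (ℕ → Bool) → ℝ) (x : ℕ → Bool) : ℝ :=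
  ∑ i ∈ Finset.Icc 1 N, ℓ i x

/-- Sequence reliability for the `L`-th order channel. -/
noncomputable def RelL (N : ℕ) (ℓ : ℕ → (ℕ → Bool) → ℝ) (xs : ℕ → Bool)
    (S : Finset ℕ) : ℝ :=
  LamL N ℓ xs - LamL N ℓ (flipSeq S xs)

/-- Lemma 4: additivity of sequence reliability over sets separated by more than
`L` indices (`L`-th order channel). -/
theorem rel_decomposable_L (L N : ℕ) (ℓ : ℕ → (ℕ → Bool) → ℝ)
    (hloc : ∀ i : ℕ, ∀ x x' : ℕ → Bool,
      (∀ j ∈ Finset.Icc (i - L) i, x j = x' j) → ℓ i x = ℓ i x')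
    (xs : ℕ → Bool) (W₁ W₂ : Finset ℕ) (h₁ : W₁.Nonempty) (h₂ : W₂.Nonempty)
    (hs₁ : W₁ ⊆ Finset.Icc 1 N) (hs₂ : W₂ ⊆ Finset.Icc 1 N)
    (hdisj : Disjoint W₁ W₂)
    (hgap : W₁.max' h₁ + L < W₂.min' h₂) :
    RelL N ℓ xs (W₁ ∪ W₂) = RelL N ℓ xs W₁ + RelL N ℓ xs W₂ := by
  unfold RelL LamL
  rw [← Finset.sum_sub_distrib, ← Finset.sum_sub_distrib, ← Finset.sum_sub_distrib,
    ← Finset.sum_add_distrib]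
  apply Finset.sum_congr rfl
  intro i _
  by_cases hc : ∀ j ∈ Finset.Icc (i - L) i, j ∉ W₂
  · have h2 : ℓ i (flipSeq W₂ xs) = ℓ i xs :=
      hloc i _ _ (fun j hj => by simp [flipSeq, hc j hj])
    have h12 : ℓ i (flipSeq (W₁ ∪ W₂) xs) = ℓ i (flipSeq W₁ xs) :=
      hloc i _ _ (fun j hj => by simp [flipSeq, Finset.mem_union, hc j hj])
    rw [h2, h12]; ring
  · push_neg at hc
    obtain ⟨j₂, hj₂w, hj₂⟩ := hc
    have hall : ∀ j ∈ Finset.Icc (i - L) i, j ∉ W₁ := by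
      intro j₁ hj₁w hj₁
      have h1 := Finset.le_max' W₁ j₁ hj₁
      have h2 := Finset.min'_le W₂ j₂ hj₂
      simp only [Finset.mem_Icc] at hj₁w hj₂w
      omega
    have h1 : ℓ i (flipSeq W₁ xs) = ℓ i xs :=
      hloc i _ _ (fun j hj => by simp [flipSeq, hall j hj])
    have h12 : ℓ i (flipSeq (W₁ ∪ W₂) xs) = ℓ i (flipSeq W₂ xs) :=
      hloc i _ _ (fun j hj => by simp [flipSeq, Finset.mem_union, hall j hj])
    rw [h1, h12]; ring
end

section
/- For an L-th order channel, if W = W₁ ∪ W₂ with W₁, W₂ disjoint nonempty subsets of {1,...,N} and 2 ≤ min(W₂) − max(W₁) ≤ L, then Rel(W) = Rel(W₁) + Rel(W₂) + Σ_{i=min(W₂)}^{min(max(W₁)+L, N)} [ ln( P(y_i | f_{W₁}(x*)_{i-L:i}) / P(y_i | x*_{i-L:i}) ) + ln( P(y_i | f_{W₂}(x*)_{i-L:i}) / P(y_i | f_W(x*)_{i-L:i}) ) ]. -/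
/-- Lemma 5: the partially-decomposable case. If the gap between `W₁` and `W₂`
is between `2` and `L`, then `Rel(W) = Rel(W₁) + Rel(W₂)` plus a correction sum
of log-likelihood-ratio terms over `min(W₂) ≤ i ≤ min(max(W₁)+L, N)`. -/
theorem rel_partially_decomposable (L N : ℕ) (ℓ : ℕ → (ℕ → Bool) → ℝ)
    (hloc : ∀ i : ℕ, ∀ x x' : ℕ → Bool,
      (∀ j ∈ Finset.Icc (i - L) i, x j = x' j) → ℓ i x = ℓ i x')
    (xs : ℕ → Bool) (W₁ W₂ : Finset ℕ) (h₁ : W₁.Nonempty) (h₂ : W₂.Nonempty)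
    (hs₁ : W₁ ⊆ Finset.Icc 1 N) (hs₂ : W₂ ⊆ Finset.Icc 1 N)
    (hdisj : Disjoint W₁ W₂)
    (hgap₁ : W₁.max' h₁ + 2 ≤ W₂.min' h₂)
    (hgap₂ : W₂.min' h₂ ≤ W₁.max' h₁ + L) :
    RelL N ℓ xs (W₁ ∪ W₂) = RelL N ℓ xs W₁ + RelL N ℓ xs W₂ +
      ∑ i ∈ Finset.Icc (W₂.min' h₂) (min (W₁.max' h₁ + L) N),
        ((ℓ i (flipSeq W₁ xs) - ℓ i xs) +
          (ℓ i (flipSeq W₂ xs) - ℓ i (flipSeq (W₁ ∪ W₂) xs))) := by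
  set m := W₁.max' h₁ with hm
  set n := W₂.min' h₂ with hn
  have hnN : 1 ≤ n ∧ n ≤ N := by
    have := hs₂ (W₂.min'_mem h₂); simpa [Finset.mem_Icc, hn] using this
  have hCsub : Finset.Icc n (min (m + L) N) ⊆ Finset.Icc 1 N := by
    intro i hi
    simp only [Finset.mem_Icc] at hi ⊢
    omega
  have key : ∀ i ∈ Finset.Icc 1 N,
      ℓ i xs - ℓ i (flipSeq (W₁ ∪ W₂) xs)
        = (ℓ i xs - ℓ i (flipSeq W₁ xs)) + (ℓ i xs - ℓ i (flipSeq W₂ xs)) +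
          (if i ∈ Finset.Icc n (min (m + L) N) then
            ((ℓ i (flipSeq W₁ xs) - ℓ i xs) +
              (ℓ i (flipSeq W₂ xs) - ℓ i (flipSeq (W₁ ∪ W₂) xs))) else 0) := by
    intro i hi
    simp only [Finset.mem_Icc] at hi
    by_cases hC : i ∈ Finset.Icc n (min (m + L) N)
    · rw [if_pos hC]; ring
    · rw [if_neg hC]
      simp only [Finset.mem_Icc, not_and_or, not_le] at hC
      rcases hC with h | h
      · -- i < n : window misses W₂
        have e1 : ℓ i (flipSeq (W₁ ∪ W₂) xs) = ℓ i (flipSeq W₁ xs) := by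
          apply hloc
          intro j hj
          simp only [Finset.mem_Icc] at hj
          have hj2 : j ∉ W₂ := fun hjW => by
            have := W₂.min'_le j hjW; omega
          simp [flipSeq, Finset.mem_union, hj2]
        have e2 : ℓ i (flipSeq W₂ xs) = ℓ i xs := by
          apply hloc
          intro j hj
          simp only [Finset.mem_Icc] at hj
          have hj2 : j ∉ W₂ := fun hjW => by
            have := W₂.min'_le j hjW; omega
          simp [flipSeq, hj2]
        rw [e1, e2]; ring
      · -- m + L < i : window misses W₁
        have hmL : m + L < i := by omega
        have e1 : ℓ i (flipSeq (W₁ ∪ W₂) xs) = ℓ i (flipSeq W₂ xs) := by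
          apply hloc
          intro j hj
          simp only [Finset.mem_Icc] at hj
          have hj1 : j ∉ W₁ := fun hjW => by
            have := W₁.le_max' j hjW; omega
          simp [flipSeq, Finset.mem_union, hj1]
        have e2 : ℓ i (flipSeq W₁ xs) = ℓ i xs := by
          apply hloc
          intro j hj
          simp only [Finset.mem_Icc] at hj
          have hj1 : j ∉ W₁ := fun hjW => by
            have := W₁.le_max' j hjW; omega
          simp [flipSeq, hj1]
        rw [e1, e2]; ring
  simp only [RelL, LamL, ← Finset.sum_sub_distrib]
  rw [Finset.sum_congr rfl key, Finset.sum_add_distrib, Finset.sum_add_distrib,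
    Finset.sum_ite_mem, Finset.inter_eq_right.mpr hCsub]
end

section
/- For a first-order channel, let e(m) = x* ⊕ x(m) be the error pattern of codeword x(m) relative to the hard detection sequence x*, with error-burst decomposition I₁,...,I_ζ. Then the sum of burst reliabilities satisfies Σ_{t=1}^{ζ} Rel(I_t) = Λ(x*, y) − Λ(x(m), y). -/
/-- Error-burst partition for the first-order channel. -/
def IsBurstPartition1 (I : Finset ℕ) (P : Finset (Finset ℕ)) : Prop :=
  (∀ B ∈ P, B.Nonempty) ∧
  (∀ B ∈ P, ∀ C ∈ P, B ≠ C → Disjoint B C) ∧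
  (P.sup id = I) ∧
  (∀ B ∈ P, ∀ a ∈ B, ∀ b ∈ B, ∀ c : ℕ, a ≤ c → c ≤ b → c ∈ B) ∧
  (∀ B ∈ P, ∀ C ∈ P, B ≠ C → ∀ a ∈ B, ∀ b ∈ C, a + 2 ≤ b ∨ b + 2 ≤ a)

/-- Key identity in Theorem 1: the sum of burst reliabilities of the error
pattern with support `D` equals `Λ(x*, y) − Λ(x(m), y)` where `x(m) = f_D(x*)`. -/
theorem sum_burst_rel (N : ℕ) (ℓ : ℕ → Bool → Bool → ℝ) (xs : ℕ → Bool)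
    (D : Finset ℕ) (hD : D ⊆ Finset.Icc 1 N)
    (P : Finset (Finset ℕ)) (hP : IsBurstPartition1 D P) :
    ∑ B ∈ P, Rel1 N ℓ xs B = Lam1 N ℓ xs - Lam1 N ℓ (flipSeq D xs) := by
  obtain ⟨hne, hdisj, hsup, hiv, hsep⟩ := hP
  have hBD : ∀ B ∈ P, B ⊆ D := fun B hB => hsup ▸ Finset.le_sup (f := id) hB
  have hmem : ∀ j ∈ D, ∃ B ∈ P, j ∈ B := by
    intro j hj
    rw [← hsup] at hj
    simpa using Finset.mem_sup.mp hj
  have key : ∀ i ∈ Finset.Icc 1 N,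
      ∑ B ∈ P, (ℓ i (xs (i-1)) (xs i) - ℓ i (flipSeq B xs (i-1)) (flipSeq B xs i))
      = ℓ i (xs (i-1)) (xs i) - ℓ i (flipSeq D xs (i-1)) (flipSeq D xs i) := by
    intro i hi
    have hi1 : 1 ≤ i := (Finset.mem_Icc.mp hi).1
    by_cases h : ∃ B ∈ P, i-1 ∈ B ∨ i ∈ B
    · obtain ⟨B₀, hB₀P, hB₀⟩ := h
      rw [Finset.sum_eq_single_of_mem B₀ hB₀P ?_]
      · have hj : ∀ j, (j = i-1 ∨ j = i) → (j ∈ B₀ ↔ j ∈ D) := by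
          intro j hjr
          constructor
          · exact fun hx => hBD B₀ hB₀P hx
          · intro hjD
            by_contra hjB
            obtain ⟨C, hCP, hjC⟩ := hmem j hjD
            have hne' : B₀ ≠ C := fun hh => hjB (hh ▸ hjC)
            rcases hB₀ with ha | ha <;> rcases hjr with rfl | rfl <;>
              rcases hsep B₀ hB₀P C hCP hne' _ ha _ hjC with h2 | h2 <;> omega
        have e1 : flipSeq B₀ xs (i-1) = flipSeq D xs (i-1) := by
          simp only [flipSeq]
          by_cases hc : (i-1) ∈ B₀
          · rw [if_pos hc, if_pos ((hj _ (Or.inl rfl)).mp hc)]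
          · rw [if_neg hc, if_neg (fun hx => hc ((hj _ (Or.inl rfl)).mpr hx))]
        have e2 : flipSeq B₀ xs i = flipSeq D xs i := by
          simp only [flipSeq]
          by_cases hc : i ∈ B₀
          · rw [if_pos hc, if_pos ((hj _ (Or.inr rfl)).mp hc)]
          · rw [if_neg hc, if_neg (fun hx => hc ((hj _ (Or.inr rfl)).mpr hx))]
        rw [e1, e2]
      · intro B hBP hBne
        have hnot : ∀ j, (j = i-1 ∨ j = i) → j ∉ B := by
          intro j hjr hjB
          rcases hB₀ with ha | ha <;> rcases hjr with rfl | rfl <;>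
            rcases hsep B hBP B₀ hB₀P hBne _ hjB _ ha with h2 | h2 <;> omega
        have e1 : flipSeq B xs (i-1) = xs (i-1) := by
          simp [flipSeq, hnot _ (Or.inl rfl)]
        have e2 : flipSeq B xs i = xs i := by
          simp [flipSeq, hnot _ (Or.inr rfl)]
        rw [e1, e2, sub_self]
    · push_neg at h
      have hD1 : i - 1 ∉ D := fun hx => by
        obtain ⟨B, hBP, hjB⟩ := hmem _ hx; exact (h B hBP).1 hjB
      have hD2 : i ∉ D := fun hx => by
        obtain ⟨B, hBP, hjB⟩ := hmem _ hx; exact (h B hBP).2 hjB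
      have e1 : flipSeq D xs (i-1) = xs (i-1) := by simp [flipSeq, hD1]
      have e2 : flipSeq D xs i = xs i := by simp [flipSeq, hD2]
      rw [e1, e2, sub_self]
      refine Finset.sum_eq_zero fun B hBP => ?_
      have hb1 : i - 1 ∉ B := fun hx => hD1 (hBD B hBP hx)
      have hb2 : i ∉ B := fun hx => hD2 (hBD B hBP hx)
      have e1 : flipSeq B xs (i-1) = xs (i-1) := by simp [flipSeq, hb1]
      have e2 : flipSeq B xs i = xs i := by simp [flipSeq, hb2]
      rw [e1, e2, sub_self]
  calc ∑ B ∈ P, Rel1 N ℓ xs B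
      = ∑ B ∈ P, ∑ i ∈ Finset.Icc 1 N,
          (ℓ i (xs (i-1)) (xs i) - ℓ i (flipSeq B xs (i-1)) (flipSeq B xs i)) := by
        simp [Rel1, Lam1, Finset.sum_sub_distrib]
    _ = ∑ i ∈ Finset.Icc 1 N, ∑ B ∈ P,
          (ℓ i (xs (i-1)) (xs i) - ℓ i (flipSeq B xs (i-1)) (flipSeq B xs i)) :=
        Finset.sum_comm
    _ = ∑ i ∈ Finset.Icc 1 N,
          (ℓ i (xs (i-1)) (xs i) - ℓ i (flipSeq D xs (i-1)) (flipSeq D xs i)) :=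
        Finset.sum_congr rfl key
    _ = _ := by simp [Lam1, Finset.sum_sub_distrib]
end

section
/- Minimizing the sum of burst reliabilities over codewords is equivalent to maximum-likelihood decoding: argmin_m Σ_{t=1}^{ζ(m)} Rel(I_t(e(m))) = argmax_m Λ(x(m), y), where I_t(e(m)) are the error bursts of e(m) = x* ⊕ x(m). -/
lemma flipSeq_congr (S D : Finset ℕ) (x : ℕ → Bool) (j : ℕ) (h : j ∈ S ↔ j ∈ D) :
    flipSeq S x j = flipSeq D x j := by
  simp only [flipSeq]
  exact if_congr h rfl rfl

lemma burst_sum_term (ℓ : ℕ → Bool → Bool → ℝ) (xs : ℕ → Bool)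
    (D : Finset ℕ) (P : Finset (Finset ℕ)) (hP : IsBurstPartition1 D P)
    (i : ℕ) (hi : 1 ≤ i) :
    ∑ B ∈ P, (ℓ i (xs (i-1)) (xs i) - ℓ i (flipSeq B xs (i-1)) (flipSeq B xs i))
      = ℓ i (xs (i-1)) (xs i) - ℓ i (flipSeq D xs (i-1)) (flipSeq D xs i) := by
  obtain ⟨hne, hdisj, hsup, hint, hgap⟩ := hP
  have hmem : ∀ j : ℕ, j ∈ D ↔ ∃ B ∈ P, j ∈ B := by
    intro j
    rw [← hsup, Finset.mem_sup]
    simp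
  by_cases hcase : i ∈ D ∨ i - 1 ∈ D
  · -- there is a unique burst containing i or i-1
    have hex : ∃ B₀ ∈ P, i ∈ B₀ ∨ i - 1 ∈ B₀ := by
      rcases hcase with h | h
      · obtain ⟨B, hB, hiB⟩ := (hmem i).mp h
        exact ⟨B, hB, Or.inl hiB⟩
      · obtain ⟨B, hB, hiB⟩ := (hmem (i-1)).mp h
        exact ⟨B, hB, Or.inr hiB⟩
    obtain ⟨B₀, hB₀, hiB₀⟩ := hex
    have huniq : ∀ B ∈ P, (i ∈ B ∨ i - 1 ∈ B) → B = B₀ := by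
      intro B hB hiB
      by_contra hne'
      rcases hiB with h1 | h1 <;> rcases hiB₀ with h2 | h2
      · exact (Finset.disjoint_left.mp (hdisj B hB B₀ hB₀ hne') h1) h2
      · have := hgap B hB B₀ hB₀ hne' i h1 (i-1) h2; omega
      · have := hgap B hB B₀ hB₀ hne' (i-1) h1 i h2; omega
      · have := hgap B hB B₀ hB₀ hne' (i-1) h1 (i-1) h2; omega
    have hDiff : ∀ j : ℕ, j = i ∨ j = i - 1 → (j ∈ B₀ ↔ j ∈ D) := by
      intro j hj
      constructor
      · intro hjB
        exact (hmem j).mpr ⟨B₀, hB₀, hjB⟩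
      · intro hjD
        obtain ⟨C, hC, hjC⟩ := (hmem j).mp hjD
        have : C = B₀ := by
          apply huniq C hC
          rcases hj with rfl | rfl
          · exact Or.inl hjC
          · exact Or.inr hjC
        exact this ▸ hjC
    rw [Finset.sum_eq_single B₀]
    · rw [flipSeq_congr B₀ D xs i (hDiff i (Or.inl rfl)),
        flipSeq_congr B₀ D xs (i-1) (hDiff (i-1) (Or.inr rfl))]
    · intro B hB hBne
      have h1 : i ∉ B := fun h => hBne (huniq B hB (Or.inl h))
      have h2 : i - 1 ∉ B := fun h => hBne (huniq B hB (Or.inr h))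
      simp [flipSeq, h1, h2]
    · intro h
      exact absurd hB₀ h
  · push_neg at hcase
    obtain ⟨h1, h2⟩ := hcase
    have hB1 : ∀ B ∈ P, i ∉ B := fun B hB h => h1 ((hmem i).mpr ⟨B, hB, h⟩)
    have hB2 : ∀ B ∈ P, i - 1 ∉ B := fun B hB h => h2 ((hmem (i-1)).mpr ⟨B, hB, h⟩)
    rw [Finset.sum_eq_zero (fun B hB => by simp [flipSeq, hB1 B hB, hB2 B hB])]
    have e1 : flipSeq D xs i = xs i := by simp [flipSeq, h1]
    have e2 : flipSeq D xs (i-1) = xs (i-1) := by simp [flipSeq, h2]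
    rw [e1, e2]; ring

lemma rel_sum (N : ℕ) (ℓ : ℕ → Bool → Bool → ℝ) (xs : ℕ → Bool)
    (D : Finset ℕ) (P : Finset (Finset ℕ)) (hP : IsBurstPartition1 D P) :
    ∑ B ∈ P, Rel1 N ℓ xs B = Rel1 N ℓ xs D := by
  unfold Rel1 Lam1
  rw [← Finset.sum_sub_distrib]
  have : ∀ B ∈ P, (∑ i ∈ Finset.Icc 1 N, ℓ i (xs (i-1)) (xs i))
      - (∑ i ∈ Finset.Icc 1 N, ℓ i (flipSeq B xs (i-1)) (flipSeq B xs i))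
      = ∑ i ∈ Finset.Icc 1 N,
        (ℓ i (xs (i-1)) (xs i) - ℓ i (flipSeq B xs (i-1)) (flipSeq B xs i)) := by
    intro B _; rw [← Finset.sum_sub_distrib]
  rw [Finset.sum_congr rfl this, Finset.sum_comm]
  have : ∀ i ∈ Finset.Icc 1 N,
      ∑ B ∈ P, (ℓ i (xs (i-1)) (xs i) - ℓ i (flipSeq B xs (i-1)) (flipSeq B xs i))
      = ℓ i (xs (i-1)) (xs i) - ℓ i (flipSeq D xs (i-1)) (flipSeq D xs i) := by
    intro i hi
    exact burst_sum_term ℓ xs D P hP i (Finset.mem_Icc.mp hi).1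
  rw [Finset.sum_congr rfl this, Finset.sum_sub_distrib]

/-- Theorem 1 (SGRAND-ISI = ML): a message minimizes the sum of burst
reliabilities of its error pattern iff it maximizes the likelihood `Λ(x(m), y)`. -/
theorem sgrand_isi_eq_ml (N M : ℕ) (ℓ : ℕ → Bool → Bool → ℝ) (xs : ℕ → Bool)
    (D : Fin M → Finset ℕ) (hD : ∀ m, D m ⊆ Finset.Icc 1 N)
    (P : Fin M → Finset (Finset ℕ)) (hP : ∀ m, IsBurstPartition1 (D m) (P m))
    (x : Fin M → ℕ → Bool) (hx : ∀ m, x m = flipSeq (D m) xs) (m : Fin M) :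
    (∀ m', ∑ B ∈ P m, Rel1 N ℓ xs B ≤ ∑ B ∈ P m', Rel1 N ℓ xs B) ↔
      (∀ m', Lam1 N ℓ (x m') ≤ Lam1 N ℓ (x m)) := by
  have key : ∀ m' : Fin M, ∑ B ∈ P m', Rel1 N ℓ xs B
      = Lam1 N ℓ xs - Lam1 N ℓ (x m') := by
    intro m'
    rw [rel_sum N ℓ xs (D m') (P m') (hP m'), hx m']
    rfl
  constructor
  · intro h m'
    have := h m'
    rw [key m, key m'] at this
    linarith
  · intro h m'
    have := h m'
    rw [key m, key m']
    linarith
end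

section
/- For a first-order channel, if S = {a,...,b} and T = {c,...,d} are two intervals of consecutive integers in {1,...,N} with b + 2 ≤ c (separated by at least one index), then flipping S∪T in x* yields Λ(x*,y) − Λ(f_{S∪T}(x*),y) = [Λ(x*,y) − Λ(f_S(x*),y)] + [Λ(x*,y) − Λ(f_T(x*),y)]; moreover each term Λ(x*,y) − Λ(f_S(x*),y) only depends on the coordinates y_i for a ≤ i ≤ min(b+1, N). -/
/-- First-order weight function with explicit dependence on the received values
`y`: `Λ(x,y) = Σ_{i=1}^N ℓ i (y i) x_{i-1} x_i` with `ℓ i y_i b' b = ln P(y_i | b', b)`. -/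
noncomputable def Lam1y (N : ℕ) (ℓ : ℕ → ℝ → Bool → Bool → ℝ) (y : ℕ → ℝ)
    (x : ℕ → Bool) : ℝ :=
  ∑ i ∈ Finset.Icc 1 N, ℓ i (y i) (x (i - 1)) (x i)

/-- Sequence reliability, with explicit dependence on `y`. -/
noncomputable def Rel1y (N : ℕ) (ℓ : ℕ → ℝ → Bool → Bool → ℝ) (y : ℕ → ℝ)
    (xs : ℕ → Bool) (S : Finset ℕ) : ℝ :=
  Lam1y N ℓ y xs - Lam1y N ℓ y (flipSeq S xs)

lemma rel1y_eq_sum (N : ℕ) (ℓ : ℕ → ℝ → Bool → Bool → ℝ) (y : ℕ → ℝ)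
    (xs : ℕ → Bool) (S : Finset ℕ) :
    Rel1y N ℓ y xs S = ∑ i ∈ Finset.Icc 1 N,
      (ℓ i (y i) (xs (i - 1)) (xs i)
        - ℓ i (y i) (flipSeq S xs (i - 1)) (flipSeq S xs i)) := by
  simp [Rel1y, Lam1y, Finset.sum_sub_distrib]

/-- For two intervals `S = {a,…,b}`, `T = {c,…,d}` in `{1,…,N}` separated by at
least one index, reliability is additive; moreover `Rel(S)` depends on `y` only
through the coordinates `y_i` for `a ≤ i ≤ min(b+1, N)`. -/
theorem rel_intervals_additive_and_local (N a b c d : ℕ)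
    (ℓ : ℕ → ℝ → Bool → Bool → ℝ) (xs : ℕ → Bool)
    (ha : 1 ≤ a) (hab : a ≤ b) (hbc : b + 2 ≤ c) (hcd : c ≤ d) (hdN : d ≤ N) :
    (∀ y : ℕ → ℝ,
      Rel1y N ℓ y xs (Finset.Icc a b ∪ Finset.Icc c d) =
        Rel1y N ℓ y xs (Finset.Icc a b) + Rel1y N ℓ y xs (Finset.Icc c d)) ∧
    (∀ y y' : ℕ → ℝ, (∀ i ∈ Finset.Icc a (min (b + 1) N), y i = y' i) →
      Rel1y N ℓ y xs (Finset.Icc a b) = Rel1y N ℓ y' xs (Finset.Icc a b)) := by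
  constructor
  · intro y
    rw [rel1y_eq_sum, rel1y_eq_sum, rel1y_eq_sum, ← Finset.sum_add_distrib]
    apply Finset.sum_congr rfl
    intro i hi
    simp only [Finset.mem_Icc] at hi
    simp only [flipSeq, Finset.mem_union, Finset.mem_Icc]
    split_ifs <;> first | ring1 | omega
  · intro y y' h
    rw [rel1y_eq_sum, rel1y_eq_sum]
    apply Finset.sum_congr rfl
    intro i hi
    simp only [Finset.mem_Icc] at hi
    by_cases hia : a ≤ i ∧ i ≤ b + 1
    · have : y i = y' i := by
        apply h; simp only [Finset.mem_Icc]; omega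
      rw [this]
    · simp only [flipSeq, Finset.mem_Icc]
      split_ifs <;> first | ring1 | omega
end
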